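/- Let V be a finite-dimensional vector space, W a finite increasing filtration on V, N : V → V nilpotent respecting W, and suppose the relative monodromy filtration W' of N relative to W exists. Then for each w ∈ ℤ and m ≥ 0 there is a direct sum decomposition gr^{W'}_{w+m} gr^W_w = A ⊕ B, where A is the kernel of N^{m+1} : gr^{W'}_{w+m} gr^W_w → gr^{W'}_{w-m-2} gr^W_w and B is the image of N : gr^{W'}_{w+m+2} gr^W_w → gr^{W'}_{w+m} gr^W_w. -/

import Mathlib

open Submodule

/-- `W` is a finite increasing filtration on `V`. -/
def IsIncrFiltration {E V : Type*} [Field E] [AddCommGroup V] [Module E V]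
    (W : ℤ → Submodule E V) : Prop :=
  Monotone W ∧ (∃ a : ℤ, ∀ w ≤ a, W w = ⊥) ∧ (∃ b : ℤ, ∀ w : ℤ, b ≤ w → W w = ⊤)

/-- `W'` is the relative monodromy filtration of `N` with respect to `W`:
`W'` is a finite increasing filtration, `N (W'_w) ⊆ W'_{w-2}`, and for all `w` and `m ≥ 0`
the map induced by `N^m` from `gr^{W'}_{w+m} gr^W_w` to `gr^{W'}_{w-m} gr^W_w` is an
isomorphism (expressed at the level of subspaces of `V`: the `k`-th piece of the filtration
induced by `W'` on `gr^W_w` is the image of `(W' k ⊓ W w) ⊔ W (w-1)`). -/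
def IsRelMonodromy {E V : Type*} [Field E] [AddCommGroup V] [Module E V]
    (N : V →ₗ[E] V) (W W' : ℤ → Submodule E V) : Prop :=
  IsIncrFiltration W' ∧
  (∀ w : ℤ, (W' w).map N ≤ W' (w - 2)) ∧
  (∀ (w : ℤ) (m : ℕ),
    -- injectivity of the induced map `N^m : gr^{W'}_{w+m} gr^W_w → gr^{W'}_{w-m} gr^W_w`
    (∀ x ∈ W' (w + (m : ℤ)) ⊓ W w,
        (N ^ m) x ∈ (W' (w - (m : ℤ) - 1) ⊓ W w) ⊔ W (w - 1) →
        x ∈ (W' (w + (m : ℤ) - 1) ⊓ W w) ⊔ W (w - 1)) ∧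
    -- surjectivity of the induced map
    (∀ y ∈ W' (w - (m : ℤ)) ⊓ W w, ∃ x ∈ W' (w + (m : ℤ)) ⊓ W w,
        y - (N ^ m) x ∈ (W' (w - (m : ℤ) - 1) ⊓ W w) ⊔ W (w - 1)))


section
variable {E V : Type*} [Field E] [AddCommGroup V] [Module E V]

lemma powW_mem (N : V →ₗ[E] V) (W : ℤ → Submodule E V)
    (hNW : ∀ w : ℤ, (W w).map N ≤ W w) (j : ℕ) (w : ℤ) {z : V} (hz : z ∈ W w) :
    (N ^ j) z ∈ W w := by
  induction j with
  | zero => simpa using hz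
  | succ n ih =>
    rw [pow_succ', Module.End.mul_apply]
    exact hNW w ⟨_, ih, rfl⟩

lemma powW'_mem (N : V →ₗ[E] V) (W' : ℤ → Submodule E V)
    (hN' : ∀ k : ℤ, (W' k).map N ≤ W' (k - 2)) (j : ℕ) (k : ℤ) {z : V} (hz : z ∈ W' k) :
    (N ^ j) z ∈ W' (k - 2 * j) := by
  induction j with
  | zero => simpa using hz
  | succ n ih =>
    rw [pow_succ', Module.End.mul_apply]
    have := hN' (k - 2 * n) ⟨_, ih, rfl⟩
    have e : k - 2 * (n : ℤ) - 2 = k - 2 * ((n : ℕ) + 1 : ℕ) := by push_cast; ring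
    rwa [e] at this

lemma pow_sup_mem (N : V →ₗ[E] V) (W W' : ℤ → Submodule E V)
    (hNW : ∀ w : ℤ, (W w).map N ≤ W w)
    (hN' : ∀ k : ℤ, (W' k).map N ≤ W' (k - 2)) (j : ℕ) (k w : ℤ) {z : V}
    (hz : z ∈ (W' k ⊓ W w) ⊔ W (w - 1)) :
    (N ^ j) z ∈ (W' (k - 2 * j) ⊓ W w) ⊔ W (w - 1) := by
  rw [Submodule.mem_sup] at hz ⊢
  obtain ⟨u, hu, v, hv, rfl⟩ := hz
  exact ⟨(N ^ j) u, ⟨powW'_mem N W' hN' j k hu.1, powW_mem N W hNW j w hu.2⟩,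
    (N ^ j) v, powW_mem N W hNW j (w - 1) hv, (map_add _ _ _).symm⟩

end
/-- The primitive decomposition `gr^{W'}_{w+m} gr^W_w = A ⊕ B`, where
`A` is the kernel of `N^{m+1} : gr^{W'}_{w+m} gr^W_w → gr^{W'}_{w-m-2} gr^W_w`
(the primitive component) and `B` is the image of
`N : gr^{W'}_{w+m+2} gr^W_w → gr^{W'}_{w+m} gr^W_w`.  All conditions are expressed at
the level of subspaces of `V`: an element of `gr^{W'}_k gr^W_w` is represented by an
element of `W' k ⊓ W w`, and it is zero iff the representative lies in
`(W' (k-1) ⊓ W w) ⊔ W (w-1)`. -/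
theorem primitive_decomposition
    {E V : Type*} [Field E] [AddCommGroup V] [Module E V] [FiniteDimensional E V]
    (W W' : ℤ → Submodule E V) (N : V →ₗ[E] V)
    (hW : IsIncrFiltration W) (hN : IsNilpotent N) (hNW : ∀ w : ℤ, (W w).map N ≤ W w)
    (h : IsRelMonodromy N W W') (w : ℤ) (m : ℕ) :
    -- `A + B` is everything:
    (∀ x ∈ W' (w + (m : ℤ)) ⊓ W w,
      ∃ a ∈ W' (w + (m : ℤ)) ⊓ W w, ∃ c ∈ W' (w + (m : ℤ) + 2) ⊓ W w,
        (N ^ (m + 1)) a ∈ (W' (w - (m : ℤ) - 3) ⊓ W w) ⊔ W (w - 1) ∧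
        x - a - N c ∈ (W' (w + (m : ℤ) - 1) ⊓ W w) ⊔ W (w - 1)) ∧
    -- `A ∩ B = 0`:
    (∀ x ∈ W' (w + (m : ℤ)) ⊓ W w,
      (N ^ (m + 1)) x ∈ (W' (w - (m : ℤ) - 3) ⊓ W w) ⊔ W (w - 1) →
      (∃ c ∈ W' (w + (m : ℤ) + 2) ⊓ W w,
        x - N c ∈ (W' (w + (m : ℤ) - 1) ⊓ W w) ⊔ W (w - 1)) →
      x ∈ (W' (w + (m : ℤ) - 1) ⊓ W w) ⊔ W (w - 1)) := by
  obtain ⟨-, hN', hiso⟩ := h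
  have e2 : ((m + 2 : ℕ) : ℤ) = (m : ℤ) + 2 := by push_cast; ring
  constructor
  · intro x hx
    -- N^{m+1} x lives in W'(w-m-2) ⊓ W w
    have hy : (N ^ (m + 1)) x ∈ W' (w - ((m + 2 : ℕ) : ℤ)) ⊓ W w := by
      refine ⟨?_, powW_mem N W hNW (m + 1) w hx.2⟩
      have := powW'_mem N W' hN' (m + 1) (w + (m : ℤ)) hx.1
      have e : w + (m : ℤ) - 2 * ((m + 1 : ℕ) : ℤ) = w - ((m + 2 : ℕ) : ℤ) := by
        push_cast; ring
      rwa [e] at this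
    obtain ⟨c, hc, hrem⟩ := (hiso w (m + 2)).2 _ hy
    rw [e2, ← add_assoc] at hc
    have hNc : N c ∈ W' (w + (m : ℤ)) ⊓ W w := by
      refine ⟨?_, hNW w ⟨c, hc.2, rfl⟩⟩
      have := hN' (w + (m : ℤ) + 2) ⟨c, hc.1, rfl⟩
      rwa [show w + (m : ℤ) + 2 - 2 = w + (m : ℤ) from by ring] at this
    refine ⟨x - N c, sub_mem hx hNc, c, hc, ?_, ?_⟩
    · have key : (N ^ (m + 1)) (x - N c) = (N ^ (m + 1)) x - (N ^ (m + 2)) c := by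
        rw [map_sub, show N ^ (m + 2) = N ^ (m + 1) * N from pow_succ N (m + 1),
          Module.End.mul_apply]
      rw [key]
      have e : w - ((m + 2 : ℕ) : ℤ) - 1 = w - (m : ℤ) - 3 := by push_cast; ring
      rwa [e] at hrem
    · have : x - (x - N c) - N c = 0 := by abel
      rw [this]; exact zero_mem _
  · intro x hx h1 ⟨c, hc, h2⟩
    -- N^{m+2} c is small, so c is small by injectivity
    have h3 : (N ^ (m + 1)) (x - N c) ∈
        (W' (w - (m : ℤ) - 3) ⊓ W w) ⊔ W (w - 1) := by
      have := pow_sup_mem N W W' hNW hN' (m + 1) (w + (m : ℤ) - 1) w h2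
      rwa [show w + (m : ℤ) - 1 - 2 * ((m + 1 : ℕ) : ℤ) = w - (m : ℤ) - 3 from by
        push_cast; ring] at this
    have h4 : (N ^ (m + 2)) c ∈ (W' (w - ((m + 2 : ℕ) : ℤ) - 1) ⊓ W w) ⊔ W (w - 1) := by
      have key : (N ^ (m + 2)) c = (N ^ (m + 1)) x - (N ^ (m + 1)) (x - N c) := by
        rw [map_sub, show N ^ (m + 2) = N ^ (m + 1) * N from pow_succ N (m + 1),
          Module.End.mul_apply]; abel
      rw [key, show w - ((m + 2 : ℕ) : ℤ) - 1 = w - (m : ℤ) - 3 from by push_cast; ring]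
      exact sub_mem h1 h3
    have hc' : c ∈ W' (w + ((m + 2 : ℕ) : ℤ)) ⊓ W w := by rw [e2, ← add_assoc]; exact hc
    have h5 := (hiso w (m + 2)).1 c hc' h4
    rw [show w + ((m + 2 : ℕ) : ℤ) - 1 = w + (m : ℤ) + 1 from by push_cast; ring] at h5
    -- hence N c is small
    have h6 : N c ∈ (W' (w + (m : ℤ) - 1) ⊓ W w) ⊔ W (w - 1) := by
      rw [Submodule.mem_sup] at h5 ⊢
      obtain ⟨u, hu, v, hv, rfl⟩ := h5
      refine ⟨N u, ⟨?_, hNW w ⟨u, hu.2, rfl⟩⟩, N v, hNW (w - 1) ⟨v, hv, rfl⟩,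
        (map_add _ _ _).symm⟩
      have := hN' (w + (m : ℤ) + 1) ⟨u, hu.1, rfl⟩
      rwa [show w + (m : ℤ) + 1 - 2 = w + (m : ℤ) - 1 from by ring] at this
    have := add_mem h2 h6
    rwa [sub_add_cancel] at this
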